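/- If M is an automorphism-invariant module, A is a closed submodule of M, B is a closed submodule of M with A ∩ B = 0, and h : A → M is a monomorphism with A ∩ h(A) = 0, then h(A) is a closed submodule of M. -/

import Mathlib

universe u v w

section Defs

variable {R : Type u} [Ring R]

/-- `N` is an essential submodule of `M`. -/
def EssentialSub {M : Type v} [AddCommGroup M] [Module R M] (N : Submodule R M) : Prop :=
  ∀ K : Submodule R M, K ⊓ N = ⊥ → K = ⊥

/-- `N` is essential in `P` (both submodules of `M`, `N ≤ P`). -/
def EssentialIn {M : Type v} [AddCommGroup M] [Module R M] (N P : Submodule R M) : Prop :=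
  N ≤ P ∧ ∀ K : Submodule R M, K ≤ P → K ⊓ N = ⊥ → K = ⊥

/-- `N` is a closed submodule of `M`: it has no proper essential extension in `M`. -/
def ClosedSub {M : Type v} [AddCommGroup M] [Module R M] (N : Submodule R M) : Prop :=
  ∀ P : Submodule R M, EssentialIn N P → N = P

/-- `i : M →ₗ[R] E` realizes `E` as an injective hull of `M`. -/
structure IsInjectiveHull {M : Type v} {E : Type w} [AddCommGroup M] [Module R M]
    [AddCommGroup E] [Module R E] (i : M →ₗ[R] E) : Prop where
  inj : Function.Injective i
  injE : Module.Injective R E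
  ess : EssentialSub (LinearMap.range i)

/-- `M` is invariant under every automorphism of the hull `E` given by `i`. -/
def HullAutInv {M : Type v} {E : Type w} [AddCommGroup M] [Module R M]
    [AddCommGroup E] [Module R E] (i : M →ₗ[R] E) : Prop :=
  ∀ g : E ≃ₗ[R] E, ∀ m : M, g (i m) ∈ LinearMap.range i

end Defs

/-- `M` is automorphism-invariant: invariant under all automorphisms of its injective hull. -/
def AutInvariant (R : Type u) [Ring R] (M : Type v) [AddCommGroup M] [Module R M] : Prop :=
  ∀ (E : Type v) [AddCommGroup E] [Module R E] (i : M →ₗ[R] E),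
    IsInjectiveHull i → HullAutInv i

/-- Every monomorphism from a submodule of `M` into `M` extends to an endomorphism of `M`. -/
def PseudoInjective (R : Type u) [Ring R] (M : Type v) [AddCommGroup M] [Module R M] : Prop :=
  ∀ (A : Submodule R M) (f : A →ₗ[R] M), Function.Injective f →
    ∃ g : M →ₗ[R] M, ∀ a : A, g a = f a

/-- Every homomorphism from a submodule of `M` into `M` extends to an endomorphism of `M`. -/
def QuasiInjective (R : Type u) [Ring R] (M : Type v) [AddCommGroup M] [Module R M] : Prop :=
  ∀ (A : Submodule R M) (f : A →ₗ[R] M), ∃ g : M →ₗ[R] M, ∀ a : A, g a = f a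

/-- `X` is `Y`-injective. -/
def RelInjective (R : Type u) [Ring R] (X : Type v) (Y : Type w) [AddCommGroup X] [Module R X]
    [AddCommGroup Y] [Module R Y] : Prop :=
  ∀ (A : Submodule R Y) (f : A →ₗ[R] X), ∃ g : Y →ₗ[R] X, ∀ a : A, g a = f a

/-- `M` contains no direct sum of two nonzero isomorphic submodules. -/
def SquareFreeMod (R : Type u) [Ring R] (M : Type v) [AddCommGroup M] [Module R M] : Prop :=
  ∀ (A B : Submodule R M), A ⊓ B = ⊥ → Nonempty (A ≃ₗ[R] B) → A = ⊥

/-- `X` and `Y` have no nonzero isomorphic submodules. -/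
def OrthogonalMod (R : Type u) [Ring R] (X : Type v) (Y : Type w) [AddCommGroup X] [Module R X]
    [AddCommGroup Y] [Module R Y] : Prop :=
  ∀ (A : Submodule R X) (B : Submodule R Y), Nonempty (A ≃ₗ[R] B) → A = ⊥

/-- No nonzero element of `M` is annihilated by an essential (right) ideal of `R`. -/
def NonsingularMod (R : Type u) [Ring R] (M : Type v) [AddCommGroup M] [Module R M] : Prop :=
  ∀ m : M, EssentialSub (LinearMap.ker (LinearMap.toSpanSingleton R M m)) → m = 0


section AuxLemmas
variable {R : Type u} [Ring R]

private def EssentialSub' {M : Type v} [AddCommGroup M] [Module R M] (N : Submodule R M) : Prop :=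
  ∀ K : Submodule R M, K ⊓ N = ⊥ → K = ⊥

/-- Every submodule has a complement `K` such that `S ⊔ K` is essential. -/
lemma exists_compl_essential {E : Type w} [AddCommGroup E] [Module R E] (S : Submodule R E) :
    ∃ K : Submodule R E, S ⊓ K = ⊥ ∧ EssentialSub' (S ⊔ K) := by
  obtain ⟨K, hK⟩ := zorn_le₀ {K : Submodule R E | S ⊓ K = ⊥} (by
    intro c hc hchain
    rcases c.eq_empty_or_nonempty with rfl | hne
    · exact ⟨⊥, by simp, by simp⟩
    · refine ⟨sSup c, ?_, fun z hz => le_sSup hz⟩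
      rw [Set.mem_setOf_eq, eq_bot_iff]
      rintro x ⟨hxS, hxK⟩
      rcases (Submodule.mem_sSup_of_directed hne hchain.directedOn).mp hxK with ⟨p, hp, hxp⟩
      have : x ∈ S ⊓ p := ⟨hxS, hxp⟩
      rwa [hc hp] at this)
  refine ⟨K, hK.prop, fun U hU => ?_⟩
  have hKU : S ⊓ (K ⊔ U) = ⊥ := by
    rw [eq_bot_iff]
    rintro x ⟨hxS, hxKU⟩
    rcases Submodule.mem_sup.mp hxKU with ⟨k, hk, u, hu, rfl⟩
    have hu2 : u ∈ U ⊓ (S ⊔ K) := ⟨hu, by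
      rw [show u = (k + u) - k from (add_sub_cancel_left k u).symm]
      exact Submodule.sub_mem _ (Submodule.mem_sup_left hxS) (Submodule.mem_sup_right hk)⟩
    rw [hU] at hu2
    have hu0 : u = 0 := hu2
    have : k + u ∈ S ⊓ K := ⟨hxS, by simpa [hu0] using hk⟩
    rwa [hK.prop] at this
  have hUK : U ≤ K := le_trans le_sup_right (hK.le_of_ge hKU le_sup_left)
  rw [eq_bot_iff]
  intro x hx
  have : x ∈ U ⊓ (S ⊔ K) := ⟨hx, Submodule.mem_sup_right (hUK hx)⟩
  rwa [hU] at this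


/-- An injective endomorphism of an injective module with essential range is surjective. -/
lemma surj_of_inj_ess {E : Type w} [AddCommGroup E] [Module R E]
    (hE : Module.Injective R E) (τ : E →ₗ[R] E) (hinj : Function.Injective τ)
    (hess : EssentialSub' (LinearMap.range τ)) : Function.Surjective τ := by
  obtain ⟨r, hr⟩ := hE.out τ hinj LinearMap.id
  set s := τ.comp r with hsdef
  have hfix : ∀ y ∈ LinearMap.range τ, s y = y := by
    rintro y ⟨x, rfl⟩
    simp only [hsdef, LinearMap.comp_apply]
    rw [hr]
    rfl
  have hker : LinearMap.ker s ⊓ LinearMap.range τ = ⊥ := by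
    rw [eq_bot_iff]
    rintro x ⟨h1, h2⟩
    have := hfix x h2
    rw [LinearMap.mem_ker.mp h1] at this
    simp [← this]
  have hker0 : LinearMap.ker s = ⊥ := hess _ hker
  intro y
  have hy : s y - y ∈ LinearMap.ker s := by
    have h1 : s (s y) = s y := hfix _ ⟨r y, rfl⟩
    rw [LinearMap.mem_ker, map_sub, h1, sub_self]
  rw [hker0] at hy
  have : s y - y = 0 := hy
  exact ⟨r y, by rw [show τ (r y) = s y from rfl, ← sub_eq_zero]; simpa using this⟩


/-- If `j, v : W → E` are injective with the same range and `E` is injective, then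
there is an automorphism of `E` carrying `j w` to `v w`. -/
lemma exists_autom {E : Type w} [AddCommGroup E] [Module R E] {W : Type v}
    [AddCommGroup W] [Module R W]
    (hE : Module.Injective R E) (j v : W →ₗ[R] E)
    (hj : Function.Injective j) (hv : Function.Injective v)
    (hround : LinearMap.range j = LinearMap.range v) :
    ∃ g : E ≃ₗ[R] E, ∀ w : W, g (j w) = v w := by
  obtain ⟨K, hdis, hess⟩ := exists_compl_essential (LinearMap.range j)
  -- j', v' : W × K → E
  set j' : W × K →ₗ[R] E := j.comp (LinearMap.fst R W K) + K.subtype.comp (LinearMap.snd R W K)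
    with hj'def
  set v' : W × K →ₗ[R] E := v.comp (LinearMap.fst R W K) + K.subtype.comp (LinearMap.snd R W K)
    with hv'def
  have hj'app : ∀ p : W × K, j' p = j p.1 + (p.2 : E) := fun p => rfl
  have hv'app : ∀ p : W × K, v' p = v p.1 + (p.2 : E) := fun p => rfl
  have hj'inj : Function.Injective j' := by
    rw [← LinearMap.ker_eq_bot, eq_bot_iff]
    rintro ⟨w, k⟩ hp
    have h0 : j w + (k : E) = 0 := hp
    have hjw : j w ∈ LinearMap.range j ⊓ K := ⟨⟨w, rfl⟩, by
      rw [eq_neg_of_add_eq_zero_left h0]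
      exact K.neg_mem k.2⟩
    rw [hdis] at hjw
    have hw : w = 0 := hj (by simpa using hjw)
    have hk : (k : E) = 0 := by rw [hw, map_zero, zero_add] at h0; exact h0
    simp [Prod.ext_iff, hw, Submodule.coe_eq_zero.mp hk]
  have hv'inj : Function.Injective v' := by
    rw [← LinearMap.ker_eq_bot, eq_bot_iff]
    rintro ⟨w, k⟩ hp
    have h0 : v w + (k : E) = 0 := hp
    have hjw : v w ∈ LinearMap.range j ⊓ K := ⟨hround ▸ ⟨w, rfl⟩, by
      rw [eq_neg_of_add_eq_zero_left h0]
      exact K.neg_mem k.2⟩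
    rw [hdis] at hjw
    have hw : w = 0 := hv (by simpa using hjw)
    have hk : (k : E) = 0 := by rw [hw, map_zero, zero_add] at h0; exact h0
    simp [Prod.ext_iff, hw, Submodule.coe_eq_zero.mp hk]
  have hrange : LinearMap.range j' = LinearMap.range j ⊔ K := by
    apply le_antisymm
    · rintro x ⟨p, rfl⟩
      rw [hj'app]
      exact Submodule.add_mem _ (Submodule.mem_sup_left ⟨p.1, rfl⟩)
        (Submodule.mem_sup_right p.2.2)
    · rw [sup_le_iff]
      constructor
      · rintro x ⟨w, rfl⟩; exact ⟨(w, 0), by simp [hj'app]⟩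
      · intro x hx; exact ⟨(0, ⟨x, hx⟩), by simp [hj'app]⟩
  have hrangev : LinearMap.range v' = LinearMap.range j ⊔ K := by
    apply le_antisymm
    · rintro x ⟨p, rfl⟩
      rw [hv'app]
      exact Submodule.add_mem _ (Submodule.mem_sup_left (hround ▸ ⟨p.1, rfl⟩))
        (Submodule.mem_sup_right p.2.2)
    · rw [sup_le_iff]
      constructor
      · rw [hround]; rintro x ⟨w, rfl⟩; exact ⟨(w, 0), by simp [hv'app]⟩
      · intro x hx; exact ⟨(0, ⟨x, hx⟩), by simp [hv'app]⟩
  -- extend: τ with τ (j' p) = v' p.  Domain trick: use subtype of range j'.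
  set N := LinearMap.range j' with hN
  set eN : (W × K) ≃ₗ[R] N := LinearEquiv.ofInjective j' hj'inj with heN
  obtain ⟨τ, hτ⟩ := hE.out N.subtype (Submodule.injective_subtype N)
    (v'.comp (eN.symm : N →ₗ[R] (W × K)))
  have hτj : ∀ p : W × K, τ (j' p) = v' p := by
    intro p
    have h1 : N.subtype (eN p) = j' p := by
      rw [heN]
      rfl
    have h2 := hτ (eN p)
    rw [h1] at h2
    rw [h2]
    simp only [LinearMap.comp_apply, LinearEquiv.coe_coe, LinearEquiv.symm_apply_apply]
  have hτinj : Function.Injective τ := by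
    rw [← LinearMap.ker_eq_bot]
    apply hess
    rw [eq_bot_iff]
    rintro x ⟨hx1, hx2⟩
    rw [← hrange] at hx2
    obtain ⟨p, rfl⟩ := hx2
    have h0 : v' p = 0 := by rw [← hτj p]; exact LinearMap.mem_ker.mp hx1
    have hp0 : p = 0 := hv'inj (by simpa using h0)
    simp [hp0]
  have hressτ : EssentialSub' (LinearMap.range τ) := by
    intro K' hK'
    apply hess
    rw [eq_bot_iff]
    rintro x ⟨hx1, hx2⟩
    rw [← hrangev] at hx2
    obtain ⟨p, rfl⟩ := hx2
    have hmem : v' p ∈ K' ⊓ LinearMap.range τ := ⟨hx1, ⟨j' p, hτj p⟩⟩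
    rw [hK'] at hmem
    exact hmem
  have hτsurj := surj_of_inj_ess hE τ hτinj hressτ
  refine ⟨LinearEquiv.ofBijective τ ⟨hτinj, hτsurj⟩, fun w => ?_⟩
  have h3 := hτj (w, 0)
  rw [hj'app, hv'app] at h3
  show τ (j w) = v w
  simpa using h3


private lemma essentialSub'_iff {M : Type v} [AddCommGroup M] [Module R M] (N : Submodule R M) :
    EssentialSub' N ↔ (EssentialSub N : Prop) := Iff.rfl

end AuxLemmas

/-- if `A`, `B` are closed submodules of the automorphism-invariant module
`M` with `A ⊓ B = 0` and `h : A → M` is a monomorphism with `A ⊓ h(A) = 0`, then `h(A)`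
is closed in `M`. -/
theorem image_of_mono_is_closed {R : Type u} [Ring R]
    {M : Type v} {E : Type w} [AddCommGroup M] [Module R M] [AddCommGroup E] [Module R E]
    (i : M →ₗ[R] E) (hhull : IsInjectiveHull i) (hinv : HullAutInv i)
    (A B : Submodule R M) (hA : ClosedSub A) (hB : ClosedSub B) (hAB : A ⊓ B = ⊥)
    (h : ↥A →ₗ[R] M) (hmono : Function.Injective h)
    (hdisj : A ⊓ LinearMap.range h = ⊥) :
    ClosedSub (LinearMap.range h) := by
  -- Step 1: build an automorphism Γ of E swapping i(A) and i(h(A))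
  set jA : (↥A × ↥A) →ₗ[R] E :=
    (i.comp A.subtype).comp (LinearMap.fst R ↥A ↥A)
      + (i.comp h).comp (LinearMap.snd R ↥A ↥A) with hjA
  have hjapp : ∀ p : ↥A × ↥A, jA p = i p.1 + i (h p.2) := fun p => rfl
  have hjinj : Function.Injective jA := by
    rw [← LinearMap.ker_eq_bot, eq_bot_iff]
    rintro ⟨a, a'⟩ hp
    have h0 : i ↑a + i (h a') = 0 := hp
    have h1 : i (↑a + h a') = i 0 := by rw [map_add, map_zero]; exact h0
    have h2 : (↑a : M) + h a' = 0 := hhull.inj h1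
    have h3 : (↑a : M) ∈ A ⊓ LinearMap.range h := ⟨a.2, by
      rw [eq_neg_of_add_eq_zero_left h2]
      exact Submodule.neg_mem _ ⟨a', rfl⟩⟩
    rw [hdisj] at h3
    have ha : a = 0 := Subtype.ext h3
    have ha' : a' = 0 := by
      apply hmono
      rw [ha] at h2
      simpa using h2
    simp [Prod.ext_iff, ha, ha']
  set sw : (↥A × ↥A) ≃ₗ[R] (↥A × ↥A) := LinearEquiv.prodComm R ↥A ↥A with hsw
  set vA : (↥A × ↥A) →ₗ[R] E := jA.comp (sw : (↥A × ↥A) →ₗ[R] (↥A × ↥A)) with hvA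
  have hvapp : ∀ p : ↥A × ↥A, vA p = i p.2 + i (h p.1) := fun p => rfl
  have hvinj : Function.Injective vA := hjinj.comp sw.injective
  have hrangeeq : LinearMap.range jA = LinearMap.range vA := by
    rw [hvA, LinearMap.range_comp_of_range_eq_top jA (LinearEquiv.range sw)]
  obtain ⟨Γ, hΓ⟩ := exists_autom hhull.injE jA vA hjinj hvinj hrangeeq
  have hΓh : ∀ a : ↥A, Γ (i (h a)) = i ↑a := by
    intro a
    have hx := hΓ (0, a)
    rw [hjapp, hvapp] at hx
    simpa using hx
  -- Step 2: the induced endomorphism gM of M with gM (h a) = a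
  have hmem : ∀ m : M, Γ (i m) ∈ LinearMap.range i := hinv Γ
  set eI : M ≃ₗ[R] LinearMap.range i := LinearEquiv.ofInjective i hhull.inj with heI
  set gM : M →ₗ[R] M := (eI.symm : LinearMap.range i →ₗ[R] M).comp
      (LinearMap.codRestrict (LinearMap.range i) (Γ.toLinearMap.comp i) hmem) with hgM
  have higM : ∀ m : M, i (gM m) = Γ (i m) := by
    intro m
    have h1 : gM m = eI.symm ⟨Γ (i m), hmem m⟩ := rfl
    have h2 : ∀ x : LinearMap.range i, i (eI.symm x) = ↑x := by
      intro x
      conv_rhs => rw [← eI.apply_symm_apply x]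
      rfl
    rw [h1, h2]
  have hkey : ∀ a : ↥A, gM (h a) = ↑a := by
    intro a
    apply hhull.inj
    rw [higM, hΓh]
  -- Step 3: lattice argument
  intro P hP
  obtain ⟨hHP, hess⟩ := hP
  have hkerP : LinearMap.ker gM ⊓ P = ⊥ := by
    apply hess _ inf_le_right
    rw [eq_bot_iff]
    rintro x ⟨⟨hx1, _⟩, hx2⟩
    obtain ⟨a, rfl⟩ := hx2
    have h0 : (↑a : M) = 0 := by rw [← hkey a]; exact LinearMap.mem_ker.mp hx1
    rw [show a = 0 from Subtype.ext h0, map_zero]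
    exact Submodule.zero_mem ⊥
  have hAeq : A = Submodule.map gM P := by
    apply hA
    constructor
    · intro x hx
      exact ⟨h ⟨x, hx⟩, hHP ⟨⟨x, hx⟩, rfl⟩, hkey ⟨x, hx⟩⟩
    · intro K hK hKA
      have hK' : (Submodule.comap gM K ⊓ P) = ⊥ := by
        apply hess _ inf_le_right
        rw [eq_bot_iff]
        rintro x ⟨⟨hx1, hxP⟩, hx2⟩
        obtain ⟨a, rfl⟩ := hx2
        have h1 : gM (h a) ∈ K := hx1
        rw [hkey a] at h1
        have h2 : (↑a : M) ∈ K ⊓ A := ⟨h1, a.2⟩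
        rw [hKA] at h2
        rw [show a = 0 from Subtype.ext h2, map_zero]
        exact Submodule.zero_mem ⊥
      rw [eq_bot_iff]
      intro x hx
      obtain ⟨p, hpP, rfl⟩ := hK hx
      have hp0 : p ∈ Submodule.comap gM K ⊓ P := ⟨hx, hpP⟩
      rw [hK'] at hp0
      rw [show p = 0 from hp0, map_zero]
      exact Submodule.zero_mem ⊥
  refine le_antisymm hHP ?_
  intro p hp
  have h1 : gM p ∈ A := by rw [hAeq]; exact ⟨p, hp, rfl⟩
  have h2 : h ⟨gM p, h1⟩ ∈ P := hHP ⟨⟨gM p, h1⟩, rfl⟩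
  have hker1 : p - h ⟨gM p, h1⟩ ∈ LinearMap.ker gM := by
    rw [LinearMap.mem_ker, map_sub, hkey ⟨gM p, h1⟩, sub_self]
  have h3 : p - h ⟨gM p, h1⟩ ∈ LinearMap.ker gM ⊓ P :=
    Submodule.mem_inf.mpr ⟨hker1, Submodule.sub_mem _ hp h2⟩
  rw [hkerP] at h3
  have h4 : p = h ⟨gM p, h1⟩ := by
    have h5 : p - h ⟨gM p, h1⟩ = 0 := h3
    rw [← sub_eq_zero]
    exact h5
  exact h4 ▸ ⟨⟨gM p, h1⟩, rfl⟩
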